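/- Suppose Φ = {φ_i}_{i=1}^M is a strictly scalable unit-norm frame for ℝ^N (there exist c_i > 0 with Σ_i c_i φ_i φ_i^T = I) and the rank-one matrices {φ_i φ_i^T}_{i=1}^M span the space Sym_N of symmetric N×N matrices. Then there exists ε > 0 such that every Ψ = {ψ_i}_{i=1}^M ⊂ ℝ^N with Σ_i ‖ψ_i − φ_i‖² < ε² is also strictly scalable. -/

import Mathlib

open scoped BigOperators
open Matrix

noncomputable section StrictScalAux

namespace StrictScalAux

lemma vecMulVec_self_isSymm {N : ℕ} (v : Fin N → ℝ) : (vecMulVec v v).IsSymm := by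
  ext i j
  simp [Matrix.transpose_apply, Matrix.vecMulVec_apply, mul_comm]

/-- The submodule of symmetric matrices. -/
def symS (N : ℕ) : Submodule ℝ (Matrix (Fin N) (Fin N) ℝ) where
  carrier := {A | A.IsSymm}
  add_mem' := fun h1 h2 => h1.add h2
  zero_mem' := Matrix.isSymm_zero
  smul_mem' := by
    intro c A h
    show (c • A)ᵀ = c • A
    rw [Matrix.transpose_smul, h]

/-- Outer product as an element of the symmetric matrices. -/
def outer {N M : ℕ} (ψ : Fin M → Fin N → ℝ) (i : Fin M) : symS N :=
  ⟨vecMulVec (ψ i) (ψ i), vecMulVec_self_isSymm (ψ i)⟩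

/-- The synthesis operator `c ↦ ∑ i, c i • ψ i ψ iᵀ` as a linear map into
the symmetric matrices. -/
def synthL {N M : ℕ} (ψ : Fin M → Fin N → ℝ) : (Fin M → ℝ) →ₗ[ℝ] symS N where
  toFun c := ∑ i, c i • outer ψ i
  map_add' := by
    intro x y
    simp [add_smul, Finset.sum_add_distrib]
  map_smul' := by
    intro r x
    simp only [RingHom.id_apply, Finset.smul_sum, Pi.smul_apply, smul_eq_mul]
    refine Finset.sum_congr rfl fun i _ => ?_
    rw [mul_smul]

lemma coe_synthL {N M : ℕ} (ψ : Fin M → Fin N → ℝ) (c : Fin M → ℝ) :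
    ((synthL ψ c : symS N) : Matrix (Fin N) (Fin N) ℝ)
      = ∑ i, c i • vecMulVec (ψ i) (ψ i) := by
  simp [synthL, outer]

lemma continuous_outer {N M : ℕ} (i : Fin M) :
    Continuous fun ψ : Fin M → Fin N → ℝ => outer ψ i := by
  apply Continuous.subtype_mk
  apply continuous_pi; intro j
  apply continuous_pi; intro k
  simp only [Matrix.vecMulVec_apply]
  fun_prop

lemma continuous_synthL_apply {N M : ℕ} (c : Fin M → ℝ) :
    Continuous fun ψ : Fin M → Fin N → ℝ => synthL ψ c := by
  show Continuous fun ψ : Fin M → Fin N → ℝ => ∑ i, c i • outer ψ i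
  exact continuous_finset_sum _ fun i _ => (continuous_outer i).const_smul (c i)

end StrictScalAux

end StrictScalAux

open StrictScalAux

/-- If Φ is a strictly scalable unit-norm frame whose rank-one outer products
span the symmetric matrices, then all sufficiently small perturbations of Φ are
strictly scalable. -/
theorem strictly_scalable_open (N M : ℕ) (φ : Fin M → Fin N → ℝ)
    (hunit : ∀ i, ∑ j, (φ i j) ^ 2 = 1)
    (hscal : ∃ c : Fin M → ℝ, (∀ i, 0 < c i) ∧
      ∑ i, c i • Matrix.vecMulVec (φ i) (φ i) = (1 : Matrix (Fin N) (Fin N) ℝ))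
    (hspan : ∀ A : Matrix (Fin N) (Fin N) ℝ, A.IsSymm →
      A ∈ Submodule.span ℝ (Set.range fun i => Matrix.vecMulVec (φ i) (φ i))) :
    ∃ ε > 0, ∀ ψ : Fin M → Fin N → ℝ,
      (∑ i, ∑ j, (ψ i j - φ i j) ^ 2) < ε ^ 2 →
      ∃ c : Fin M → ℝ, (∀ i, 0 < c i) ∧
        ∑ i, c i • Matrix.vecMulVec (ψ i) (ψ i) = (1 : Matrix (Fin N) (Fin N) ℝ) := by
  classical
  obtain ⟨c₀, hc₀pos, hc₀⟩ := hscal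
  -- surjectivity of the synthesis operator of φ onto the symmetric matrices
  have hsurj : LinearMap.range (synthL (N := N) (M := M) φ) = ⊤ := by
    rw [LinearMap.range_eq_top]
    rintro ⟨A, hA⟩
    obtain ⟨c, hc⟩ := (Submodule.mem_span_range_iff_exists_fun ℝ).1 (hspan A hA)
    refine ⟨c, ?_⟩
    apply Subtype.ext
    rw [coe_synthL]
    exact hc
  obtain ⟨R, hR⟩ := (synthL (N := N) (M := M) φ).exists_rightInverse_of_surjective hsurj
  -- basis of the symmetric matrices
  let b : Module.Basis (Fin (Module.finrank ℝ (symS N))) ℝ (symS N) := Module.finBasis ℝ (symS N)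
  -- the matrix of the perturbed synthesis composed with the right inverse
  let mat : (Fin M → Fin N → ℝ) →
      Matrix (Fin (Module.finrank ℝ (symS N))) (Fin (Module.finrank ℝ (symS N))) ℝ :=
    fun ψ => LinearMap.toMatrix b b ((synthL ψ).comp R)
  have honeS : (1 : Matrix (Fin N) (Fin N) ℝ) ∈ symS N := Matrix.isSymm_one
  let oneS : symS N := ⟨1, honeS⟩
  let err : (Fin M → Fin N → ℝ) → symS N := fun ψ => oneS - synthL ψ c₀
  let cmap : (Fin M → Fin N → ℝ) → (Fin M → ℝ) := fun ψ =>
    c₀ + R (b.equivFun.symm ((mat ψ)⁻¹ *ᵥ b.equivFun (err ψ)))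
  -- basic values at φ
  have hsynthφ : synthL φ c₀ = oneS := by
    apply Subtype.ext
    rw [coe_synthL]
    exact hc₀
  have herrφ : err φ = 0 := by simp [err, hsynthφ]
  have hmatφ : mat φ = 1 := by
    show LinearMap.toMatrix b b ((synthL φ).comp R) = 1
    rw [hR, LinearMap.toMatrix_id]
  have hcmapφ : cmap φ = c₀ := by
    simp [cmap, herrφ]
  -- whenever the matrix is invertible, the candidate coefficients solve the equation
  have hsol : ∀ ψ : Fin M → Fin N → ℝ, IsUnit (mat ψ).det → synthL ψ (cmap ψ) = oneS := by
    intro ψ hdet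
    set x : symS N := b.equivFun.symm ((mat ψ)⁻¹ *ᵥ b.equivFun (err ψ)) with hxdef
    have hx : ((synthL ψ).comp R) x = err ψ := by
      apply b.repr.injective
      apply DFunLike.coe_injective
      have h1 : (mat ψ) *ᵥ ⇑(b.repr x) = ⇑(b.repr (((synthL ψ).comp R) x)) :=
        LinearMap.toMatrix_mulVec_repr b b ((synthL ψ).comp R) x
      have h2 : ⇑(b.repr x) = (mat ψ)⁻¹ *ᵥ b.equivFun (err ψ) := by
        funext k
        have hk : ⇑(b.repr x) k = b.equivFun x k := by rw [b.equivFun_apply]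
        rw [hk, hxdef, b.equivFun.apply_symm_apply]
      have h3 : ⇑(b.repr (err ψ)) = b.equivFun (err ψ) := by
        funext k
        rw [b.equivFun_apply]
      show ⇑(b.repr (((synthL ψ).comp R) x)) = ⇑(b.repr (err ψ))
      rw [← h1, h2, Matrix.mulVec_mulVec, Matrix.mul_nonsing_inv _ hdet,
        Matrix.one_mulVec, h3]
    have hdecomp : synthL ψ (cmap ψ) = synthL ψ c₀ + ((synthL ψ).comp R) x := by
      show synthL ψ (c₀ + R x) = _
      rw [map_add]
      rfl
    rw [hdecomp, hx]
    show synthL ψ c₀ + (oneS - synthL ψ c₀) = oneS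
    abel
  -- continuity facts
  have hcont_err : Continuous err :=
    continuous_const.sub (continuous_synthL_apply c₀)
  have hcont_mat : Continuous mat := by
    apply continuous_pi; intro k
    apply continuous_pi; intro l
    have h1 : Continuous fun ψ : Fin M → Fin N → ℝ => synthL ψ (R (b l)) :=
      continuous_synthL_apply (R (b l))
    have h2 : Continuous b.equivFun.toLinearMap :=
      LinearMap.continuous_of_finiteDimensional _
    have heq : (fun ψ : Fin M → Fin N → ℝ => mat ψ k l)
        = fun ψ => b.equivFun.toLinearMap (synthL ψ (R (b l))) k := by
      funext ψ
      show LinearMap.toMatrix b b ((synthL ψ).comp R) k l = _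
      rw [LinearMap.toMatrix_apply]
      simp only [LinearEquiv.coe_toLinearMap, b.equivFun_apply]
      rfl
    rw [heq]
    exact (continuous_apply k).comp (h2.comp h1)
  have hdetφ : (mat φ).det = 1 := by rw [hmatφ]; simp
  have hcont_det : Continuous fun ψ => (mat ψ).det := hcont_mat.matrix_det
  -- continuity of cmap at φ
  have hcont_inv : ContinuousAt (fun ψ => (mat ψ)⁻¹) φ := by
    have hinvdef : (fun ψ => (mat ψ)⁻¹)
        = fun ψ => Ring.inverse (mat ψ).det • (mat ψ).adjugate := by
      funext ψ; exact Matrix.inv_def (mat ψ)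
    rw [hinvdef]
    have h1 : ContinuousAt (fun ψ => Ring.inverse (mat ψ).det) φ := by
      have hri : (fun ψ => Ring.inverse (mat ψ).det) = fun ψ => ((mat ψ).det)⁻¹ := by
        funext ψ; exact Ring.inverse_eq_inv _
      rw [hri]
      exact hcont_det.continuousAt.inv₀ (by rw [hdetφ]; norm_num)
    exact h1.smul hcont_mat.matrix_adjugate.continuousAt
  have hcont_cmap : ContinuousAt cmap φ := by
    have hReq : Continuous R :=
      LinearMap.continuous_of_finiteDimensional _
    have hEq : Continuous b.equivFun.symm.toLinearMap :=
      LinearMap.continuous_of_finiteDimensional _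
    have hEqf : Continuous b.equivFun.toLinearMap :=
      LinearMap.continuous_of_finiteDimensional _
    have hmv : ContinuousAt (fun ψ => (mat ψ)⁻¹ *ᵥ b.equivFun (err ψ)) φ := by
      apply continuousAt_pi.2; intro k
      have hco : (fun ψ : Fin M → Fin N → ℝ => ((mat ψ)⁻¹ *ᵥ b.equivFun (err ψ)) k)
          = fun ψ => ∑ l, (mat ψ)⁻¹ k l * b.equivFun (err ψ) l := by
        funext ψ
        simp [Matrix.mulVec, dotProduct]
      rw [hco]
      apply tendsto_finset_sum; intro l _
      have hel : Continuous (fun A : Matrix (Fin (Module.finrank ℝ (symS N)))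
          (Fin (Module.finrank ℝ (symS N))) ℝ => A k l) :=
        (continuous_apply l).comp (continuous_apply k)
      have ha : ContinuousAt (fun ψ : Fin M → Fin N → ℝ => (mat ψ)⁻¹ k l) φ :=
        hel.continuousAt.comp hcont_inv
      have hb : ContinuousAt (fun ψ : Fin M → Fin N → ℝ => b.equivFun (err ψ) l) φ :=
        ((continuous_apply l).comp (hEqf.comp hcont_err)).continuousAt
      exact ha.mul hb
    exact continuousAt_const.add
      (((hReq.comp hEq).continuousAt).comp hmv)
  -- the good neighborhood
  have hU1 : {ψ : Fin M → Fin N → ℝ | (mat ψ).det ≠ 0} ∈ nhds φ := by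
    have : IsOpen {ψ : Fin M → Fin N → ℝ | (mat ψ).det ≠ 0} :=
      isOpen_compl_iff.2 (isClosed_singleton.preimage hcont_det)
    exact this.mem_nhds (by simp [hdetφ])
  have hopen_pos : IsOpen {v : Fin M → ℝ | ∀ i, 0 < v i} := by
    have hiU : {v : Fin M → ℝ | ∀ i, 0 < v i} = ⋂ i, {v : Fin M → ℝ | 0 < v i} := by
      ext v; simp
    rw [hiU]
    exact isOpen_iInter_of_finite fun i => isOpen_lt continuous_const (continuous_apply i)
  have hU2 : {ψ : Fin M → Fin N → ℝ | ∀ i, 0 < cmap ψ i} ∈ nhds φ :=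
    hcont_cmap.preimage_mem_nhds (hopen_pos.mem_nhds (by rw [hcmapφ]; exact hc₀pos))
  obtain ⟨r, hr, hball⟩ := Metric.mem_nhds_iff.1 (Filter.inter_mem hU1 hU2)
  refine ⟨r, hr, ?_⟩
  intro ψ hψ
  have hmem : ψ ∈ Metric.ball φ r := by
    rw [Metric.mem_ball, dist_pi_lt_iff hr]
    intro i
    rw [dist_pi_lt_iff hr]
    intro j
    rw [Real.dist_eq]
    have hle : (ψ i j - φ i j) ^ 2 ≤ ∑ i, ∑ j, (ψ i j - φ i j) ^ 2 := by
      calc (ψ i j - φ i j) ^ 2 ≤ ∑ j, (ψ i j - φ i j) ^ 2 :=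
            Finset.single_le_sum (f := fun j => (ψ i j - φ i j) ^ 2)
              (fun _ _ => sq_nonneg _) (Finset.mem_univ j)
        _ ≤ ∑ i, ∑ j, (ψ i j - φ i j) ^ 2 :=
            Finset.single_le_sum
              (f := fun i => ∑ j, (ψ i j - φ i j) ^ 2)
              (fun _ _ => Finset.sum_nonneg fun _ _ => sq_nonneg _)
              (Finset.mem_univ i)
    have h2 : |ψ i j - φ i j| ^ 2 < r ^ 2 := by
      rw [sq_abs]; exact lt_of_le_of_lt hle hψ
    exact lt_of_pow_lt_pow_left₀ 2 hr.le h2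
  obtain ⟨hdet, hpos⟩ := hball hmem
  refine ⟨cmap ψ, hpos, ?_⟩
  have hfin := hsol ψ (isUnit_iff_ne_zero.2 hdet)
  have hcoe := congrArg (Subtype.val : symS N → Matrix (Fin N) (Fin N) ℝ) hfin
  rw [coe_synthL] at hcoe
  exact hcoe
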